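/- Let T be a measure-preserving transformation of a probability space, (s_{n,i})_{(r_n)} a dynamical sequence of integers, and B a measurable set. If for every sequence of measurable sets (A_n), (1/r_n)∑_{i<r_n} |μ(T^{s_{n,i}}(A_n) ∩ B) − μ(A_n)μ(B)| → 0, then ∫ |(1/r_n)∑_{i<r_n} χ_B∘T^{-s_{n,i}} − μ(B)| dμ → 0. (Proof idea: take A_n⁺ and A_n⁻ to be the sets where the Cesàro average minus μ(B) is nonnegative, respectively negative.) -/

import Mathlib

open MeasureTheory Filter Finset

/-- Integer iterate of an invertible transformation. -/
noncomputable def iterZ {X : Type*} [MeasurableSpace X] (T : X ≃ᵐ X) (k : ℤ) : X → X :=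
  if 0 ≤ k then (⇑T)^[k.toNat] else (⇑T.symm)^[(-k).toNat]

lemma WM_iterZ_eq_zpow {X : Type*} [MeasurableSpace X] (T : X ≃ᵐ X) (k : ℤ) :
    iterZ T k = ⇑(T.toEquiv ^ k) := by
  unfold iterZ
  rcases le_or_gt 0 k with h | h
  · rw [if_pos h]
    conv_rhs => rw [show k = (k.toNat : ℤ) from (Int.toNat_of_nonneg h).symm]
    rw [zpow_natCast, Equiv.Perm.coe_pow]
    rfl
  · rw [if_neg (not_le.2 h)]
    have hk : T.toEquiv ^ k = (T.toEquiv⁻¹) ^ (-k).toNat := by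
      conv_lhs => rw [show k = -(((-k).toNat : ℕ) : ℤ) by omega]
      rw [zpow_neg, zpow_natCast, inv_pow]
    rw [hk, Equiv.Perm.coe_pow]
    rfl

lemma WM_zpow_apply_zpow {X : Type*} (P : Equiv.Perm X) (u v : ℤ) (x : X) :
    (P ^ u) ((P ^ v) x) = (P ^ (u + v)) x := by
  rw [zpow_add]; rfl

lemma WM_iterZ_mp {X : Type*} [MeasurableSpace X] {μ : Measure X} (T : X ≃ᵐ X)
    (hT : MeasurePreserving T μ μ) (k : ℤ) :
    MeasurePreserving (⇑(T.toEquiv ^ k)) μ μ := by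
  rw [← WM_iterZ_eq_zpow]
  unfold iterZ
  split_ifs
  · exact hT.iterate _
  · exact (MeasurePreserving.symm T hT).iterate _

lemma WM_zpow_image_eq_preimage {X : Type*} (P : Equiv.Perm X) (k : ℤ) (B : Set X) :
    (⇑(P ^ k)) '' B = (⇑(P ^ (-k))) ⁻¹' B := by
  rw [Equiv.image_eq_preimage_symm, ← Equiv.Perm.inv_def, ← zpow_neg]

/-- The key correlation identity:
`μ(T^{-a}⁻¹B ∩ T^{-b}⁻¹B) = μ(T^a(T^{-b}B) ∩ B)`. -/
lemma WM_meas_key {X : Type*} [MeasurableSpace X] {μ : Measure X} (T : X ≃ᵐ X)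
    (hT : MeasurePreserving T μ μ) {B : Set X} (hB : MeasurableSet B) (a b : ℤ) :
    μ ((⇑(T.toEquiv ^ (-a))) ⁻¹' B ∩ (⇑(T.toEquiv ^ (-b))) ⁻¹' B)
      = μ ((⇑(T.toEquiv ^ a)) '' ((⇑(T.toEquiv ^ (-b))) '' B) ∩ B) := by
  set P : Equiv.Perm X := T.toEquiv with hP
  have hmeas : ∀ k : ℤ, Measurable (⇑(P ^ k)) := fun k => (WM_iterZ_mp T hT k).measurable
  have hset : (⇑(P ^ (-a))) ⁻¹' B ∩ (⇑(P ^ (-b))) ⁻¹' B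
      = (⇑(P ^ (-b))) ⁻¹' ((⇑(P ^ a)) '' ((⇑(P ^ (-b))) '' B) ∩ B) := by
    ext x
    simp only [WM_zpow_image_eq_preimage, Set.mem_inter_iff, Set.mem_preimage,
      WM_zpow_apply_zpow]
    rw [show - -b + (-a + -b) = -a by ring]
  rw [hset]
  refine (WM_iterZ_mp T hT (-b)).measure_preimage ?_
  refine (MeasurableSet.inter ?_ hB).nullMeasurableSet
  rw [WM_zpow_image_eq_preimage, WM_zpow_image_eq_preimage]
  exact (hmeas _) ((hmeas _) hB)

theorem weak_mixing_on_B_imp_L1_ergodic_on_B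
    {X : Type*} [MeasurableSpace X] (μ : Measure X) [IsProbabilityMeasure μ]
    (T : X ≃ᵐ X) (hT : MeasurePreserving T μ μ)
    (r : ℕ → ℕ) (hrtop : Tendsto r atTop atTop)
    (s : ℕ → ℕ → ℤ)
    (B : Set X) (hB : MeasurableSet B)
    (hwm : ∀ A : ℕ → Set X, (∀ n, MeasurableSet (A n)) →
      Tendsto (fun n : ℕ =>
          (1 / (r n : ℝ)) * ∑ i ∈ Finset.range (r n),
            |(μ (iterZ T (s n i) '' A n ∩ B)).toReal - (μ (A n)).toReal * (μ B).toReal|)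
        atTop (nhds 0)) :
    Tendsto (fun n : ℕ =>
        ∫ x, |(1 / (r n : ℝ)) * ∑ i ∈ Finset.range (r n),
            B.indicator (fun _ => (1 : ℝ)) (iterZ T (-(s n i)) x) - (μ B).toReal| ∂μ)
      atTop (nhds 0) := by
  classical
  have hBnm : NullMeasurableSet B μ := hB.nullMeasurableSet
  set P : Equiv.Perm X := T.toEquiv with hP
  have hmp : ∀ k : ℤ, MeasurePreserving (⇑(P ^ k)) μ μ := WM_iterZ_mp T hT
  have hmeas : ∀ k : ℤ, Measurable (⇑(P ^ k)) := fun k => (hmp k).measurable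
  have himg : ∀ k : ℤ, μ ((⇑(P ^ k)) '' B) = μ B := fun k => by
    rw [WM_zpow_image_eq_preimage]; exact (hmp _).measure_preimage hBnm
  set m : ℝ := (μ B).toReal with hm
  set S : ℕ → ℕ → Set X := fun n i => (⇑(P ^ (-(s n i)))) ⁻¹' B with hS
  have hSmeas : ∀ n i, MeasurableSet (S n i) := fun n i => (hmeas _) hB
  have hSmu : ∀ n i, μ (S n i) = μ B := fun n i => (hmp _).measure_preimage hBnm
  set g : ℕ → ℕ → X → ℝ := fun n i => (S n i).indicator (fun _ => (1:ℝ)) with hg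
  -- correlations
  set c : ℕ → ℕ → ℕ → ℝ := fun n i j =>
    (μ ((⇑(P ^ (s n i))) '' ((⇑(P ^ (-(s n j)))) '' B) ∩ B)).toReal with hc
  set term : ℕ → ℕ → ℝ :=
    fun n j => (1 / (r n : ℝ)) * ∑ i ∈ Finset.range (r n), |c n i j - m * m| with hterm
  set G : ℕ → ℝ := fun n => (1 / (r n : ℝ)) * ∑ j ∈ Finset.range (r n), term n j with hGdef
  have hterm_nonneg : ∀ n j, 0 ≤ term n j := by
    intro n j
    refine mul_nonneg (by positivity) (Finset.sum_nonneg fun i _ => abs_nonneg _)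
  have hG_nonneg : ∀ n, 0 ≤ G n := by
    intro n
    refine mul_nonneg (by positivity) (Finset.sum_nonneg fun j _ => hterm_nonneg n j)
  -- Step 1 : G → 0
  have hGzero : Tendsto G atTop (nhds 0) := by
    have hex : ∀ n, ∃ j, G n ≤ term n j := by
      intro n
      rcases Nat.eq_zero_or_pos (r n) with h0 | hpos
      · refine ⟨0, ?_⟩
        have hG0 : G n = 0 := by simp [hGdef, h0]
        rw [hG0]
        exact hterm_nonneg n 0
      · obtain ⟨j, hjmem, hmax⟩ :=
          Finset.exists_max_image (Finset.range (r n)) (term n) ⟨0, Finset.mem_range.2 hpos⟩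
        refine ⟨j, ?_⟩
        have hRpos : (0:ℝ) < (r n : ℝ) := by exact_mod_cast hpos
        calc G n = (1 / (r n : ℝ)) * ∑ j' ∈ Finset.range (r n), term n j' := rfl
          _ ≤ (1 / (r n : ℝ)) * ((r n : ℝ) * term n j) := by
              refine mul_le_mul_of_nonneg_left ?_ (by positivity)
              calc ∑ j' ∈ Finset.range (r n), term n j'
                  ≤ ∑ _j' ∈ Finset.range (r n), term n j :=
                    Finset.sum_le_sum fun j' hj' => hmax j' hj'
                _ = (r n : ℝ) * term n j := by
                    rw [Finset.sum_const, Finset.card_range, nsmul_eq_mul]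
          _ = term n j := by field_simp
    choose jn hjn using hex
    have hAmeas : ∀ n, MeasurableSet ((⇑(P ^ (-(s n (jn n))))) '' B) := by
      intro n
      rw [WM_zpow_image_eq_preimage]
      exact (hmeas _) hB
    have hA := hwm (fun n => (⇑(P ^ (-(s n (jn n))))) '' B) hAmeas
    have heq : (fun n => (1 / (r n : ℝ)) * ∑ i ∈ Finset.range (r n),
        |(μ (iterZ T (s n i) '' ((⇑(P ^ (-(s n (jn n))))) '' B) ∩ B)).toReal -
          (μ ((⇑(P ^ (-(s n (jn n))))) '' B)).toReal * (μ B).toReal|)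
        = fun n => term n (jn n) := by
      funext n
      simp only [hterm]
      congr 1
      refine Finset.sum_congr rfl fun i _ => ?_
      rw [WM_iterZ_eq_zpow, himg, ← hm, ← hP, hc]
    rw [heq] at hA
    exact squeeze_zero hG_nonneg hjn hA
  -- Step 2 : eventual bound of the L¹ norm by √(G n)
  have hmain : ∀ᶠ n in atTop,
      ∫ x, |(1 / (r n : ℝ)) * ∑ i ∈ Finset.range (r n), g n i x - m| ∂μ
        ≤ Real.sqrt (G n) := by
    filter_upwards [hrtop.eventually_ge_atTop 1] with n hr
    have hRpos : (0:ℝ) < (r n : ℝ) := by exact_mod_cast hr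
    set R : ℝ := (r n : ℝ) with hR
    set f : X → ℝ := fun x => (1 / R) * ∑ i ∈ Finset.range (r n), g n i x - m with hf
    have hfeq : f = fun x => (1 / R) * ∑ i ∈ Finset.range (r n), (g n i x - m) := by
      funext x
      simp only [hf, Finset.sum_sub_distrib, Finset.sum_const, Finset.card_range,
        nsmul_eq_mul, mul_sub]
      rw [hR]
      field_simp
    have hgint : ∀ i, Integrable (fun x => g n i x) μ :=
      fun i => (integrable_const (1:ℝ)).indicator (hSmeas n i)
    have hgmint : ∀ i, Integrable (fun x => g n i x - m) μ :=
      fun i => (hgint i).sub (integrable_const m)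
    have hgval : ∀ i, ∫ x, g n i x ∂μ = m := by
      intro i
      simp only [hg]
      rw [integral_indicator_const (1:ℝ) (hSmeas n i), measureReal_def, hSmu, smul_eq_mul, mul_one, hm]
    have hfint : Integrable f μ := by
      rw [hfeq]
      exact (integrable_finset_sum _ fun i _ => hgmint i).const_mul _
    -- products
    have hprod_eq : ∀ i j, (fun x => (g n i x - m) * (g n j x - m))
        = fun x => (S n i ∩ S n j).indicator (fun _ => (1:ℝ)) x
            - m * g n i x - m * g n j x + m * m := by
      intro i j
      funext x
      by_cases hi : x ∈ S n i <;> by_cases hj : x ∈ S n j <;>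
        simp [hg, Set.indicator_apply, hi, hj, Set.mem_inter_iff] <;> ring
    have hprodint : ∀ i j, Integrable (fun x => (g n i x - m) * (g n j x - m)) μ := by
      intro i j
      rw [hprod_eq i j]
      exact ((((integrable_const (1:ℝ)).indicator
        ((hSmeas n i).inter (hSmeas n j))).sub ((hgint i).const_mul m)).sub
        ((hgint j).const_mul m)).add (integrable_const (m * m))
    have hprodval : ∀ i j, ∫ x, (g n i x - m) * (g n j x - m) ∂μ = c n i j - m * m := by
      intro i j
      rw [hprod_eq i j]
      have I0 : Integrable (fun x => (S n i ∩ S n j).indicator (fun _ => (1:ℝ)) x) μ :=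
        (integrable_const (1:ℝ)).indicator ((hSmeas n i).inter (hSmeas n j))
      have I1 : Integrable (fun x => m * g n i x) μ := (hgint i).const_mul m
      have I2 : Integrable (fun x => m * g n j x) μ := (hgint j).const_mul m
      have I01 : Integrable
          (fun x => (S n i ∩ S n j).indicator (fun _ => (1:ℝ)) x - m * g n i x) μ :=
        I0.sub I1
      have I012 : Integrable
          (fun x => (S n i ∩ S n j).indicator (fun _ => (1:ℝ)) x - m * g n i x
            - m * g n j x) μ := I01.sub I2
      rw [integral_add I012 (integrable_const (m * m)), integral_sub I01 I2,
        integral_sub I0 I1, integral_const_mul, integral_const_mul, hgval, hgval,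
        integral_indicator_const (1:ℝ) ((hSmeas n i).inter (hSmeas n j)), measureReal_def,
        integral_const]
      have hkey : (μ (S n i ∩ S n j)).toReal = c n i j := by
        simp only [hS, hc]
        rw [WM_meas_key T hT hB (s n i) (s n j)]
      rw [hkey]
      simp [measure_univ]
    -- expansion of the square
    have hsq : (fun x => (f x)^2)
        = fun x => (1/R)^2 * ∑ i ∈ Finset.range (r n), ∑ j ∈ Finset.range (r n),
            (g n i x - m) * (g n j x - m) := by
      funext x
      rw [hfeq]
      have hexp2 : (∑ i ∈ Finset.range (r n), (g n i x - m)) ^ 2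
          = ∑ i ∈ Finset.range (r n), ∑ j ∈ Finset.range (r n),
              (g n i x - m) * (g n j x - m) := by
        rw [pow_two, Finset.sum_mul_sum]
      rw [mul_pow, hexp2]
    have hf2int : Integrable (fun x => (f x)^2) μ := by
      rw [hsq]
      exact (integrable_finset_sum _ fun i _ =>
        integrable_finset_sum _ fun j _ => hprodint i j).const_mul _
    have hint2 : ∫ x, (f x)^2 ∂μ
        = (1/R)^2 * ∑ i ∈ Finset.range (r n), ∑ j ∈ Finset.range (r n), (c n i j - m * m) := by
      rw [hsq, integral_const_mul]
      congr 1
      rw [integral_finset_sum _ fun i _ =>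
        integrable_finset_sum _ fun j _ => hprodint i j]
      refine Finset.sum_congr rfl fun i _ => ?_
      rw [integral_finset_sum _ fun j _ => hprodint i j]
      exact Finset.sum_congr rfl fun j _ => hprodval i j
    have hint2le : ∫ x, (f x)^2 ∂μ ≤ G n := by
      rw [hint2]
      have h1 : ∑ i ∈ Finset.range (r n), ∑ j ∈ Finset.range (r n), (c n i j - m * m)
          ≤ ∑ i ∈ Finset.range (r n), ∑ j ∈ Finset.range (r n), |c n i j - m * m| :=
        Finset.sum_le_sum fun i _ => Finset.sum_le_sum fun j _ => le_abs_self _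
      have h2 : G n = (1/R)^2 * ∑ i ∈ Finset.range (r n), ∑ j ∈ Finset.range (r n),
          |c n i j - m * m| := by
        simp only [hGdef, hterm, ← hR]
        rw [Finset.mul_sum, Finset.sum_comm, Finset.mul_sum]
        refine Finset.sum_congr rfl fun j _ => ?_
        ring
      rw [h2]
      exact mul_le_mul_of_nonneg_left h1 (by positivity)
    -- Cauchy–Schwarz via the variance trick
    set t : ℝ := ∫ x, |f x| ∂μ with ht
    have ht0 : 0 ≤ t := integral_nonneg fun x => abs_nonneg _
    have hfabs : Integrable (fun x => |f x|) μ := hfint.abs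
    have hcs : t^2 ≤ ∫ x, (f x)^2 ∂μ := by
      have h0 : 0 ≤ ∫ x, (|f x| - t)^2 ∂μ := integral_nonneg fun x => sq_nonneg _
      have hexp : (fun x => (|f x| - t)^2)
          = fun x => (f x)^2 - (2*t) * |f x| + t^2 := by
        funext x
        rw [sub_sq, sq_abs]
        ring
      rw [hexp] at h0
      have J1 : Integrable (fun x => (2*t) * |f x|) μ := hfabs.const_mul _
      have J2 : Integrable (fun x => (f x)^2 - (2*t) * |f x|) μ := hf2int.sub J1
      rw [integral_add J2 (integrable_const _),
        integral_sub hf2int J1, integral_const_mul, integral_const] at h0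
      simp only [probReal_univ, ENNReal.toReal_one, smul_eq_mul, one_mul, ← ht] at h0
      nlinarith [h0]
    calc ∫ x, |f x| ∂μ = Real.sqrt (t^2) := by rw [Real.sqrt_sq ht0]
      _ ≤ Real.sqrt (G n) := Real.sqrt_le_sqrt (hcs.trans hint2le)
  -- Step 3 : conclude
  have hsqrtG : Tendsto (fun n => Real.sqrt (G n)) atTop (nhds 0) := by
    have := (Real.continuous_sqrt.tendsto 0).comp hGzero
    simpa [Function.comp_def] using this
  have htend : Tendsto (fun n =>
      ∫ x, |(1 / (r n : ℝ)) * ∑ i ∈ Finset.range (r n), g n i x - m| ∂μ)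
      atTop (nhds 0) :=
    squeeze_zero' (Eventually.of_forall fun n => integral_nonneg fun x => abs_nonneg _)
      hmain hsqrtG
  -- rewrite the goal to match htend
  have htarget : (fun n : ℕ =>
      ∫ x, |(1 / (r n : ℝ)) * ∑ i ∈ Finset.range (r n),
          B.indicator (fun _ => (1 : ℝ)) (iterZ T (-(s n i)) x) - m| ∂μ)
      = fun n => ∫ x, |(1 / (r n : ℝ)) * ∑ i ∈ Finset.range (r n), g n i x - m| ∂μ := by
    funext n
    congr 1
    funext x
    have h : ∀ i ∈ Finset.range (r n),
        B.indicator (fun _ => (1:ℝ)) (iterZ T (-(s n i)) x) = g n i x := by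
      intro i _
      rw [WM_iterZ_eq_zpow]
      by_cases hx : (⇑(P ^ (-(s n i)))) x ∈ B
      · simp [hg, hS, Set.indicator_apply, hx, ← hP, Equiv.Perm.inv_def]
      · simp [hg, hS, Set.indicator_apply, hx, ← hP, Equiv.Perm.inv_def]
    rw [Finset.sum_congr rfl h]
  rw [htarget]
  exact htend
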